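/- Let Σ be a reduced root system with simple roots Δ and Weyl group W. Suppose ν is dominant, α ∈ Σ⁺, v ∈ W satisfies that v(ν) is dominant and v(α) is a simple root, and k ≥ 0 is an integer with ⟨ν,α⟩ − 2k ≥ 0. Then v(ν − k·α̌) is dominant. -/

import Mathlib

open Module

variable {V : Type} [AddCommGroup V] [Module ℝ V]

/-- A reduced crystallographic root system in the dual of `V`, with a chosen
positive system. -/
structure RootSystemData (V : Type) [AddCommGroup V] [Module ℝ V] where
  roots : Finset (Module.Dual ℝ V)
  coroot : Module.Dual ℝ V → V
  pos : Finset (Module.Dual ℝ V)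
  root_ne_zero : ∀ α ∈ roots, α ≠ 0
  coroot_self : ∀ α ∈ roots, α (coroot α) = 2
  reflection_mem : ∀ α ∈ roots, ∀ β ∈ roots, β - β (coroot α) • α ∈ roots
  crystallographic : ∀ α ∈ roots, ∀ β ∈ roots, ∃ n : ℤ, β (coroot α) = (n : ℝ)
  reduced : ∀ α ∈ roots, ∀ t : ℝ, t • α ∈ roots → t = 1 ∨ t = -1
  pos_subset : pos ⊆ roots
  pos_or_neg : ∀ α ∈ roots, α ∈ pos ∨ -α ∈ pos
  pos_not_neg : ∀ α ∈ pos, -α ∉ pos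
  pos_add : ∀ α ∈ pos, ∀ β ∈ pos, α + β ∈ roots → α + β ∈ pos

/-- The contragredient action of a linear automorphism of `V` on the dual space:
`(w β)(v) = β (w⁻¹ v)`. -/
noncomputable def dualAct (w : V ≃ₗ[ℝ] V) (β : Module.Dual ℝ V) : Module.Dual ℝ V :=
  β.comp w.symm.toLinearMap

namespace RootSystemData

variable (D : RootSystemData V)

/-- `ℓ(v) = Σ_{β ∈ Σ⁺} |⟨v, β⟩|`, the length of the translation by `v`. -/
noncomputable def coLen (v : V) : ℝ := ∑ β ∈ D.pos, |β v|

/-- The reflection `s_α` acting on `V`, as a linear automorphism. -/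
noncomputable def reflV (α : Module.Dual ℝ V) (h : α (D.coroot α) = 2) : V ≃ₗ[ℝ] V where
  toFun := fun v => v - α v • D.coroot α
  map_add' := by intro x y; simp only [map_add, add_smul]; abel
  map_smul' := by intro r x; simp only [map_smul, smul_eq_mul, RingHom.id_apply, smul_sub,
    smul_smul]
  invFun := fun v => v - α v • D.coroot α
  left_inv := by
    intro v
    simp only [map_sub, map_smul, smul_eq_mul, h]
    have : α v - α v * 2 = -(α v) := by ring
    rw [this, neg_smul, sub_neg_eq_add, sub_add_cancel]
  right_inv := by
    intro v
    simp only [map_sub, map_smul, smul_eq_mul, h]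
    have : α v - α v * 2 = -(α v) := by ring
    rw [this, neg_smul, sub_neg_eq_add, sub_add_cancel]

/-- The reflection attached to a root. -/
noncomputable def sRef (α : Module.Dual ℝ V) (h : α ∈ D.roots) : V ≃ₗ[ℝ] V :=
  D.reflV α (D.coroot_self α h)

/-- The Weyl group, as the subgroup of `GL(V)` generated by the reflections in the roots. -/
noncomputable def weylGroup : Subgroup (V ≃ₗ[ℝ] V) :=
  Subgroup.closure {e | ∃ α, ∃ h : α ∈ D.roots, e = D.sRef α h}

open scoped Classical in
/-- The length of a Weyl group element: the number of positive roots made negative. -/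
noncomputable def lenW (w : V ≃ₗ[ℝ] V) : ℕ :=
  (D.pos.filter fun β => dualAct w β ∉ D.pos).card

/-- The Bruhat order, via the standard characterization: the reflexive-transitive
closure of the relation `x < t x` whenever `t` is a reflection and `ℓ(x) < ℓ(t x)`. -/
def bruhatLE (x y : V ≃ₗ[ℝ] V) : Prop :=
  Relation.ReflTransGen
    (fun u v => D.lenW u < D.lenW v ∧ ∃ α, ∃ h : α ∈ D.roots, v = D.sRef α h * u) x y

/-- Strict Bruhat order. -/
def bruhatLT (x y : V ≃ₗ[ℝ] V) : Prop := D.bruhatLE x y ∧ x ≠ y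

/-- A simple (positive) root: a positive root which is not the sum of two positive roots. -/
def IsSimpleRoot (α : Module.Dual ℝ V) : Prop :=
  α ∈ D.pos ∧ ¬ ∃ β ∈ D.pos, ∃ γ ∈ D.pos, α = β + γ

/-- The set `Δ_w = {α ∈ Δ : w(α) > 0}`. -/
def DeltaW (w : V ≃ₗ[ℝ] V) : Set (Module.Dual ℝ V) :=
  {α | D.IsSimpleRoot α ∧ dualAct w α ∈ D.pos}

/-- The parabolic subgroup `W_Θ` generated by the reflections in the roots belonging
to `Θ`. -/
noncomputable def parabolic (Θ : Set (Module.Dual ℝ V)) : Subgroup (V ≃ₗ[ℝ] V) :=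
  Subgroup.closure {e | ∃ α, ∃ h : α ∈ D.roots, α ∈ Θ ∧ e = D.sRef α h}

/-- A dominant coweight. -/
def IsDominant (v : V) : Prop := ∀ β ∈ D.pos, 0 ≤ β v

end RootSystemData

namespace RootSystemData

variable (D : RootSystemData V)

/-- Auxiliary Weyl-invariant positive-semidefinite bilinear form. -/
noncomputable def BF (x y : V) : ℝ := ∑ β ∈ D.roots, β x * β y

lemma BF_symm (x y : V) : D.BF x y = D.BF y x :=
  Finset.sum_congr rfl fun _ _ => mul_comm _ _

lemma BF_nonneg (x : V) : 0 ≤ D.BF x x :=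
  Finset.sum_nonneg fun _ _ => mul_self_nonneg _

lemma BF_sub_smul_left (x z w : V) (t : ℝ) :
    D.BF (x - t • z) w = D.BF x w - t * D.BF z w := by
  unfold BF
  rw [Finset.mul_sum, ← Finset.sum_sub_distrib]
  refine Finset.sum_congr rfl fun β _ => ?_
  simp only [map_sub, map_smul, smul_eq_mul]
  ring

lemma BF_sub_smul_right (x z w : V) (t : ℝ) :
    D.BF w (x - t • z) = D.BF w x - t * D.BF w z := by
  rw [D.BF_symm w, D.BF_sub_smul_left, D.BF_symm x w, D.BF_symm z w]

lemma BF_reflect {σ : Module.Dual ℝ V} (hσ : σ ∈ D.roots) (x y : V) :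
    D.BF (x - σ x • D.coroot σ) (y - σ y • D.coroot σ) = D.BF x y := by
  have h2 := D.coroot_self σ hσ
  unfold BF
  refine Finset.sum_nbij' (fun β => β - β (D.coroot σ) • σ)
    (fun β => β - β (D.coroot σ) • σ)
    (fun β hb => D.reflection_mem σ hσ β hb)
    (fun β hb => D.reflection_mem σ hσ β hb) ?_ ?_ ?_
  · intro β _
    show (β - β (D.coroot σ) • σ) - ((β - β (D.coroot σ) • σ)) (D.coroot σ) • σ = β
    have e : (β - β (D.coroot σ) • σ) (D.coroot σ) = - β (D.coroot σ) := by
      simp only [LinearMap.sub_apply, LinearMap.smul_apply, smul_eq_mul, h2]; ring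
    rw [e]
    module
  · intro β _
    show (β - β (D.coroot σ) • σ) - ((β - β (D.coroot σ) • σ)) (D.coroot σ) • σ = β
    have e : (β - β (D.coroot σ) • σ) (D.coroot σ) = - β (D.coroot σ) := by
      simp only [LinearMap.sub_apply, LinearMap.smul_apply, smul_eq_mul, h2]; ring
    rw [e]
    module
  · intro β _
    simp only [LinearMap.sub_apply, LinearMap.smul_apply, smul_eq_mul, map_sub, map_smul]
    ring

lemma BF_formula {ρ : Module.Dual ℝ V} (hρ : ρ ∈ D.roots) (x : V) :
    ρ x * D.BF (D.coroot ρ) (D.coroot ρ) = 2 * D.BF x (D.coroot ρ) := by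
  have h2 := D.coroot_self ρ hρ
  have h := D.BF_reflect hρ x (D.coroot ρ)
  rw [h2] at h
  rw [D.BF_sub_smul_left, D.BF_sub_smul_right, D.BF_sub_smul_right] at h
  linarith

lemma four_le_BF {ρ : Module.Dual ℝ V} (hρ : ρ ∈ D.roots) :
    4 ≤ D.BF (D.coroot ρ) (D.coroot ρ) := by
  have h2 := D.coroot_self ρ hρ
  have h := Finset.single_le_sum
    (f := fun β : Module.Dual ℝ V => β (D.coroot ρ) * β (D.coroot ρ))
    (fun β _ => mul_self_nonneg _) hρ
  rw [h2] at h
  unfold BF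
  linarith

lemma BF_cauchy (x y : V) (hy : 0 < D.BF y y) :
    D.BF x y ^ 2 ≤ D.BF x x * D.BF y y := by
  have key := D.BF_nonneg (x - (D.BF x y / D.BF y y) • y)
  rw [D.BF_sub_smul_left, D.BF_sub_smul_right, D.BF_sub_smul_right,
    D.BF_symm y x] at key
  have h : 0 ≤ D.BF x x - D.BF x y ^ 2 / D.BF y y := by
    have e : D.BF x x - D.BF x y / D.BF y y * D.BF x y -
        D.BF x y / D.BF y y * (D.BF x y - D.BF x y / D.BF y y * D.BF y y) =
        D.BF x x - D.BF x y ^ 2 / D.BF y y := by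
      field_simp
      ring
    rw [e] at key
    exact key
  rw [← sub_nonneg]
  calc (0:ℝ) ≤ (D.BF x x - D.BF x y ^ 2 / D.BF y y) * D.BF y y := mul_nonneg h hy.le
    _ = D.BF x x * D.BF y y - D.BF x y ^ 2 := by field_simp

lemma BF_zero_of_isotropic {z : V} (hz : D.BF z z = 0) {ρ : Module.Dual ℝ V}
    (hρ : ρ ∈ D.roots) : ρ z = 0 := by
  have h4 := D.four_le_BF hρ
  have hc := D.BF_cauchy z (D.coroot ρ) (by linarith)
  rw [hz, zero_mul] at hc
  have hzρ : D.BF z (D.coroot ρ) = 0 := by nlinarith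
  have hf := D.BF_formula hρ z
  rw [hzρ] at hf
  nlinarith

lemma BF_weyl {w : V ≃ₗ[ℝ] V} (hw : w ∈ D.weylGroup) :
    ∀ x y : V, D.BF (w x) (w y) = D.BF x y := by
  refine Subgroup.closure_induction
    (p := fun w _ => ∀ x y : V, D.BF (w x) (w y) = D.BF x y) ?_ ?_ ?_ ?_ hw
  · rintro e ⟨σ, hσm, rfl⟩ x y
    exact D.BF_reflect hσm x y
  · intro x y; rfl
  · intro a b _ _ ha hb x y
    calc D.BF ((a * b) x) ((a * b) y) = D.BF (a (b x)) (a (b y)) := rfl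
      _ = D.BF (b x) (b y) := ha _ _
      _ = D.BF x y := hb _ _
  · intro a _ ha x y
    have h1 : ∀ u : V, a (a⁻¹ u) = u := fun u => a.apply_symm_apply u
    calc D.BF (a⁻¹ x) (a⁻¹ y) = D.BF (a (a⁻¹ x)) (a (a⁻¹ y)) := (ha _ _).symm
      _ = D.BF x y := by rw [h1, h1]

/-- If two roots have pairings `c`, `d` with `c * d = 4` and are not proportional,
we get infinitely many roots — contradiction. -/
lemma inf_contra {σ β : Module.Dual ℝ V} (hσ : σ ∈ D.roots) (hβ : β ∈ D.roots)
    (hne : β ≠ σ) (c d : ℝ) (hc : β (D.coroot σ) = c) (hd : σ (D.coroot β) = d)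
    (hd1 : 1 ≤ d) (hcd : c * d = 4) : False := by
  have h2σ := D.coroot_self σ hσ
  have h2β := D.coroot_self β hβ
  set ρ : ℕ → Module.Dual ℝ V :=
    fun n => (2 * (n : ℝ) + 1) • σ - ((n : ℝ) * d) • β with hρdef
  have hmem : ∀ n, ρ n ∈ D.roots := by
    intro n
    induction n with
    | zero => simpa [hρdef] using hσ
    | succ n ih =>
      have e1 : (ρ n) (D.coroot β) = d := by
        simp only [hρdef, LinearMap.sub_apply, LinearMap.smul_apply, smul_eq_mul, h2β, hd]
        ring
      have r1 := D.reflection_mem β hβ (ρ n) ih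
      rw [e1] at r1
      have e2 : (ρ n - d • β) (D.coroot σ) = -2 := by
        simp only [hρdef, LinearMap.sub_apply, LinearMap.smul_apply, smul_eq_mul, h2σ, hc]
        linear_combination (-(n : ℝ) - 1) * hcd
      have r2 := D.reflection_mem σ hσ _ r1
      rw [e2] at r2
      have e3 : ρ n - d • β - (-2 : ℝ) • σ = ρ (n + 1) := by
        simp only [hρdef]
        push_cast
        module
      rwa [e3] at r2
  have hinj : Function.Injective ρ := by
    intro a b hab
    by_contra hne'
    have hu : ((a : ℝ) - b) ≠ 0 := by
      intro h
      exact hne' (Nat.cast_injective (by linarith : (a:ℝ) = b))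
    have h0 : (2 * ((a : ℝ) - b)) • σ - (((a : ℝ) - b) * d) • β = 0 := by
      have e : ((2 * (a : ℝ) + 1) • σ - ((a : ℝ) * d) • β) -
          ((2 * (b : ℝ) + 1) • σ - ((b : ℝ) * d) • β) =
          (2 * ((a : ℝ) - b)) • σ - (((a : ℝ) - b) * d) • β := by module
      rw [← e, show ((2 * (a : ℝ) + 1) • σ - ((a : ℝ) * d) • β) = ρ a from rfl,
        show ((2 * (b : ℝ) + 1) • σ - ((b : ℝ) * d) • β) = ρ b from rfl, hab, sub_self]
    have hσβ : σ = (d / 2) • β := by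
      have h2u : (2 * ((a : ℝ) - b)) ≠ 0 := by
        intro h; apply hu; linarith
      refine smul_right_injective (Module.Dual ℝ V) h2u ?_
      show (2 * ((a : ℝ) - b)) • σ = (2 * ((a : ℝ) - b)) • ((d / 2) • β)
      rw [sub_eq_zero] at h0
      rw [h0, smul_smul]
      congr 1
      ring
    have hred := D.reduced β hβ (d / 2) (by rw [← hσβ]; exact hσ)
    rcases hred with h | h
    · have hd2 : d = 2 := by linarith
      rw [hd2] at hσβ
      norm_num at hσβ
      exact hne hσβ.symm
    · linarith
  exact Set.not_infinite.mpr D.roots.finite_toSet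
    (Set.infinite_of_injective_forall_mem hinj fun n => hmem n)

/-- Core lemma: if `μ` is dominant, `σ` is simple, and `σ μ ≥ 2k`, then for every
positive root `β`, `β μ ≥ k ⟨β, σ̌⟩`. -/
lemma core {μ : V} {σ : Module.Dual ℝ V} (hμdom : D.IsDominant μ)
    (hs : D.IsSimpleRoot σ) (k : ℕ) (hk : 2 * (k : ℝ) ≤ σ μ)
    {β : Module.Dual ℝ V} (hβ : β ∈ D.pos) :
    (k : ℝ) * β (D.coroot σ) ≤ β μ := by
  have hσp := hs.1
  have hσr := D.pos_subset hσp
  have hβr := D.pos_subset hβ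
  have hknn : (0 : ℝ) ≤ (k : ℝ) := Nat.cast_nonneg k
  rcases le_or_gt (β (D.coroot σ)) 0 with h0 | h0
  · have hb := hμdom β hβ
    nlinarith
  by_cases hβσ : β = σ
  · subst hβσ
    rw [D.coroot_self β hβr]
    linarith
  obtain ⟨n, hn⟩ := D.crystallographic σ hσr β hβr
  have hn1 : 1 ≤ n := by
    have : (0 : ℝ) < (n : ℝ) := by rw [← hn]; exact h0
    exact_mod_cast this
  have hδr := D.reflection_mem σ hσr β hβr
  have hδp : β - β (D.coroot σ) • σ ∈ D.pos := by
    by_contra hcon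
    rcases D.pos_or_neg _ hδr with hp | hp
    · exact hcon hp
    -- hp : -(β - c • σ) ∈ pos ; derive a contradiction
    obtain ⟨m, hm⟩ := D.crystallographic β hβr σ hσr
    have hfσβ := D.BF_formula hβr (D.coroot σ)
    have hfβσ := D.BF_formula hσr (D.coroot β)
    have hsymm : D.BF (D.coroot β) (D.coroot σ) = D.BF (D.coroot σ) (D.coroot β) :=
      D.BF_symm _ _
    have hS4 := D.four_le_BF hσr
    have hT4 := D.four_le_BF hβr
    have hcauchy := D.BF_cauchy (D.coroot σ) (D.coroot β) (by linarith)
    rw [hn] at hfσβ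
    rw [hm, hsymm] at hfβσ
    have hn1' : (1 : ℝ) ≤ (n : ℝ) := by exact_mod_cast hn1
    -- P > 0
    have hP : 0 < D.BF (D.coroot σ) (D.coroot β) := by nlinarith
    have hm1 : 1 ≤ m := by
      have : (0 : ℝ) < (m : ℝ) := by nlinarith
      exact_mod_cast this
    have hm1' : (1 : ℝ) ≤ (m : ℝ) := by exact_mod_cast hm1
    have hprod : ((n : ℝ) * D.BF (D.coroot β) (D.coroot β)) *
        ((m : ℝ) * D.BF (D.coroot σ) (D.coroot σ)) =
        (2 * D.BF (D.coroot σ) (D.coroot β)) * (2 * D.BF (D.coroot σ) (D.coroot β)) := by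
      rw [hfσβ, hfβσ]
    have hST : (0 : ℝ) < D.BF (D.coroot σ) (D.coroot σ) * D.BF (D.coroot β) (D.coroot β) := by
      nlinarith
    have hnm : n * m ≤ 4 := by
      have : ((n * m : ℤ) : ℝ) ≤ 4 := by
        push_cast
        nlinarith [hprod, hcauchy, hST]
      exact_mod_cast this
    have hn4 : n ≤ 4 := by
      nlinarith [hnm, hm1, hn1, mul_le_mul_of_nonneg_left hm1 (by linarith : (0:ℤ) ≤ n)]
    rw [hn] at hp
    -- case analysis
    interval_cases n
    · -- n = 1 : σ = β + (σ - β)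
      have hp' : σ - β ∈ D.pos := by
        have e : -(β - ((1 : ℤ) : ℝ) • σ) = σ - β := by push_cast; module
        rwa [e] at hp
      exact hs.2 ⟨β, hβ, σ - β, hp', by abel⟩
    · -- n = 2
      have hm2 : m ≤ 2 := by omega
      interval_cases m
      · -- m = 1 : chain argument
        have hτr := D.reflection_mem β hβr σ hσr
        rw [hm] at hτr
        have hτr' : σ - β ∈ D.roots := by
          have e : σ - ((1 : ℤ) : ℝ) • β = σ - β := by push_cast; module
          rwa [e] at hτr
        rcases D.pos_or_neg _ hτr' with hq | hq
        · exact hs.2 ⟨β, hβ, σ - β, hq, by abel⟩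
        · have hq' : β - σ ∈ D.pos := by rwa [neg_sub] at hq
          refine hs.2 ⟨β - σ, hq', -(β - ((2 : ℤ) : ℝ) • σ), hp, ?_⟩
          push_cast
          module
      · -- m = 2 : infinite roots
        exact D.inf_contra hσr hβr hβσ 2 2 (by rw [hn]; norm_num)
          (by rw [hm]; norm_num) (by norm_num) (by norm_num)
    · -- n = 3 ; m = 1 forced
      have hm3 : m = 1 := by omega
      subst hm3
      have hτr := D.reflection_mem β hβr σ hσr
      rw [hm] at hτr
      have hτr' : σ - β ∈ D.roots := by
        have e : σ - ((1 : ℤ) : ℝ) • β = σ - β := by push_cast; module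
        rwa [e] at hτr
      rcases D.pos_or_neg _ hτr' with hq | hq
      · exact hs.2 ⟨β, hβ, σ - β, hq, by abel⟩
      · have hq' : β - σ ∈ D.pos := by rwa [neg_sub] at hq
        have hβσr : β - σ ∈ D.roots := D.pos_subset hq'
        have h2 := D.reflection_mem σ hσr _ hβσr
        have e : (β - σ) (D.coroot σ) = 1 := by
          simp only [LinearMap.sub_apply, hn, D.coroot_self σ hσr]
          push_cast
          ring
        rw [e] at h2
        have e2 : β - σ - (1 : ℝ) • σ = β - σ - σ := by module
        rw [e2] at h2
        rcases D.pos_or_neg _ h2 with hq2 | hq2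
        · refine hs.2 ⟨β - σ - σ, hq2, -(β - ((3 : ℤ) : ℝ) • σ), hp, ?_⟩
          push_cast
          module
        · exact hs.2 ⟨-(β - σ - σ), hq2, β - σ, hq', by abel⟩
    · -- n = 4 ; m = 1 forced
      have hm4 : m = 1 := by omega
      subst hm4
      exact D.inf_contra hσr hβr hβσ 4 1 (by rw [hn]; norm_num)
        (by rw [hm]; norm_num) (by norm_num) (by norm_num)
  -- subclaim established; finish
  have h1 := hμdom _ hδp
  simp only [LinearMap.sub_apply, LinearMap.smul_apply, smul_eq_mul] at h1
  have hc1 : (1 : ℝ) ≤ β (D.coroot σ) := by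
    rw [hn]
    exact_mod_cast hn1
  nlinarith [mul_le_mul_of_nonneg_left hk (by linarith : (0:ℝ) ≤ β (D.coroot σ)),
    mul_nonneg hknn (by linarith : (0:ℝ) ≤ β (D.coroot σ))]

lemma coroot_image {v : V ≃ₗ[ℝ] V} (hv : v ∈ D.weylGroup) {α : Module.Dual ℝ V}
    (hα : α ∈ D.roots) (hσ : dualAct v α ∈ D.roots) {β : Module.Dual ℝ V}
    (hβ : β ∈ D.roots) :
    β (v (D.coroot α)) = β (D.coroot (dualAct v α)) := by
  have hσv : ∀ x : V, (dualAct v α) (v x) = α x := fun x => by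
    simp [dualAct]
  have hA : D.BF (v (D.coroot α)) (v (D.coroot α)) = D.BF (D.coroot α) (D.coroot α) :=
    D.BF_weyl hv _ _
  have hf1 := D.BF_formula hσ (v (D.coroot α))
  rw [hσv, D.coroot_self α hα] at hf1
  have hf2 := D.BF_formula hα (v.symm (D.coroot (dualAct v α)))
  have hσσ : α (v.symm (D.coroot (dualAct v α))) = 2 := D.coroot_self _ hσ
  rw [hσσ] at hf2
  have hBsv := D.BF_weyl hv (v.symm (D.coroot (dualAct v α))) (D.coroot α)
  rw [LinearEquiv.apply_symm_apply] at hBsv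
  have hsym1 : D.BF (D.coroot (dualAct v α)) (v (D.coroot α)) =
      D.BF (v (D.coroot α)) (D.coroot (dualAct v α)) := D.BF_symm _ _
  have hz : D.BF (v (D.coroot α) - D.coroot (dualAct v α))
      (v (D.coroot α) - D.coroot (dualAct v α)) = 0 := by
    have e : v (D.coroot α) - D.coroot (dualAct v α) =
        v (D.coroot α) - (1 : ℝ) • D.coroot (dualAct v α) := by module
    rw [e, D.BF_sub_smul_left, D.BF_sub_smul_right, D.BF_sub_smul_right]
    linarith
  have hzero := D.BF_zero_of_isotropic hz hβ
  rw [map_sub] at hzero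
  linarith

end RootSystemData

/-- If `ν` is dominant, `α ∈ Σ⁺`, `v ∈ W` satisfies that `v(ν)` is
dominant and `v(α)` is simple, and `k ≥ 0` is an integer with `⟨ν,α⟩ − 2k ≥ 0`, then
`v(ν − k·α̌)` is dominant. -/
theorem dominant_of_simple_image (D : RootSystemData V) (ν : V) (hν : D.IsDominant ν)
    (α : Module.Dual ℝ V) (hα : α ∈ D.pos) (v : V ≃ₗ[ℝ] V) (hv : v ∈ D.weylGroup)
    (hvν : D.IsDominant (v ν)) (hvα : D.IsSimpleRoot (dualAct v α))
    (k : ℕ) (hk : 0 ≤ α ν - 2 * (k : ℝ)) :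
    D.IsDominant (v (ν - (k : ℝ) • D.coroot α)) := by
  intro β hβ
  have hαr := D.pos_subset hα
  have hσr : dualAct v α ∈ D.roots := D.pos_subset hvα.1
  have hco := D.coroot_image hv hαr hσr (D.pos_subset hβ)
  have hval : β (v (ν - (k : ℝ) • D.coroot α)) =
      β (v ν) - (k : ℝ) * β (D.coroot (dualAct v α)) := by
    rw [map_sub, map_smul, map_sub, map_smul, smul_eq_mul, hco]
  rw [hval]
  have hσν : (dualAct v α) (v ν) = α ν := by simp [dualAct]
  have hcore := D.core hvν hvα k (by rw [hσν]; linarith) hβ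
  linarith
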